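/- Let H ∈ ℝ^{n×n} be symmetric with smallest eigenvalue λ_n, let g ∈ ℝⁿ and M > 0, and define for r > −2λ_n/M the function v_l(r) := −(1/2)⟨(H + (Mr/2) I)⁻¹ g, g⟩ − (M/12) r³ and z(r) := −(H + (Mr/2) I)⁻¹ g (note H + (Mr/2)I is positive definite for such r). Then v_l is differentiable at every r > −2λ_n/M with derivative v_l'(r) = (M/4)(‖z(r)‖² − r²). -/

import Mathlib

open scoped BigOperators

/-- Let `H ∈ ℝ^{n×n}` be symmetric with smallest eigenvalue
`λₙ = min_{‖w‖=1} ⟨w, Hw⟩`, let `g ∈ ℝⁿ`, `M > 0`, and for `r > −2λₙ/M` set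
`v_l(r) = −(1/2)⟨(H + (Mr/2) I)⁻¹ g, g⟩ − (M/12) r³` and `z(r) = −(H + (Mr/2) I)⁻¹ g`
(note `H + (Mr/2) I` is positive definite for such `r`).  Then `v_l` is differentiable at every
`r > −2λₙ/M` with derivative `v_l'(r) = (M/4)(‖z(r)‖² − r²)`. -/
theorem statement13 {n : ℕ} (H : Matrix (Fin n) (Fin n) ℝ) (hH : H.IsSymm)
    (g : EuclideanSpace ℝ (Fin n)) (M : ℝ) (hM : 0 < M) (lamn : ℝ)
    (hlam : IsLeast {c : ℝ | ∃ w : EuclideanSpace ℝ (Fin n),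
      ‖w‖ = 1 ∧ c = ∑ i, ∑ j, w i * H i j * w j} lamn) :
    (∀ s : ℝ, -2 * lamn / M < s →
      (H + (M * s / 2) • (1 : Matrix (Fin n) (Fin n) ℝ)).PosDef) ∧
    ∀ r : ℝ, -2 * lamn / M < r →
      HasDerivAt
        (fun s : ℝ => -(1 / 2) * (∑ i, ((H + (M * s / 2) •
            (1 : Matrix (Fin n) (Fin n) ℝ))⁻¹.mulVec (fun j => g j)) i * g i) -
          (M / 12) * s ^ 3)
        ((M / 4) * ((∑ i, (((H + (M * r / 2) •
            (1 : Matrix (Fin n) (Fin n) ℝ))⁻¹.mulVec (fun j => g j)) i) ^ 2) - r ^ 2))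
        r := by
  classical
  -- positive definiteness
  have hsymm : ∀ s : ℝ, (H + (M * s / 2) • (1 : Matrix (Fin n) (Fin n) ℝ)).IsSymm := by
    intro s
    unfold Matrix.IsSymm
    rw [Matrix.transpose_add, hH, Matrix.transpose_smul, Matrix.transpose_one]
  have hpos : ∀ s : ℝ, -2 * lamn / M < s →
      (H + (M * s / 2) • (1 : Matrix (Fin n) (Fin n) ℝ)).PosDef := by
    intro s hs
    have hlam' : 0 < lamn + M * s / 2 := by
      rw [div_lt_iff₀ hM] at hs
      nlinarith
    rw [Matrix.posDef_iff_dotProduct_mulVec]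
    constructor
    · exact (hsymm s)
    · intro x hx
      set nx2 : ℝ := ∑ i, x i ^ 2 with hnx2
      have hnx2pos : 0 < nx2 := by
        have : ∃ i, x i ≠ 0 := by
          by_contra h
          push_neg at h
          exact hx (funext h)
        obtain ⟨i, hi⟩ := this
        exact Finset.sum_pos' (fun j _ => sq_nonneg _) ⟨i, Finset.mem_univ i, by positivity⟩
      set nx : ℝ := Real.sqrt nx2 with hnx
      have hnxpos : 0 < nx := Real.sqrt_pos.mpr hnx2pos
      have hnxsq : nx ^ 2 = nx2 := Real.sq_sqrt hnx2pos.le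
      -- the unit vector
      set w : EuclideanSpace ℝ (Fin n) := (WithLp.equiv 2 (Fin n → ℝ)).symm (fun i => x i / nx) with hw
      have hwi : ∀ i, w i = x i / nx := fun i => rfl
      have hwnorm : ‖w‖ = 1 := by
        rw [EuclideanSpace.norm_eq]
        have : ∑ i, ‖w i‖ ^ 2 = 1 := by
          simp only [hwi, Real.norm_eq_abs, sq_abs, div_pow]
          rw [← Finset.sum_div, hnxsq, ← hnx2, div_self hnx2pos.ne']
        rw [this, Real.sqrt_one]
      have hmem : lamn ≤ ∑ i, ∑ j, w i * H i j * w j := hlam.2 ⟨w, hwnorm, rfl⟩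
      have hquad : ∑ i, ∑ j, w i * H i j * w j = (∑ i, ∑ j, x i * H i j * x j) / nx2 := by
        rw [Finset.sum_div]
        refine Finset.sum_congr rfl fun i _ => ?_
        rw [Finset.sum_div]
        refine Finset.sum_congr rfl fun j _ => ?_
        rw [hwi, hwi, ← hnxsq]
        ring
      have hlow : lamn * nx2 ≤ ∑ i, ∑ j, x i * H i j * x j := by
        rw [hquad] at hmem
        calc lamn * nx2 ≤ ((∑ i, ∑ j, x i * H i j * x j) / nx2) * nx2 := by
              exact mul_le_mul_of_nonneg_right hmem hnx2pos.le
          _ = ∑ i, ∑ j, x i * H i j * x j := by field_simp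
      -- compute the quadratic form
      have hform : dotProduct (star x)
          ((H + (M * s / 2) • (1 : Matrix (Fin n) (Fin n) ℝ)).mulVec x)
          = (∑ i, ∑ j, x i * H i j * x j) + (M * s / 2) * nx2 := by
        simp only [Matrix.add_mulVec, Matrix.smul_mulVec, Matrix.one_mulVec,
          dotProduct_add, dotProduct_smul, star_trivial]
        congr 1
        · simp [dotProduct, Matrix.mulVec, Finset.mul_sum, mul_assoc]
        · simp [dotProduct, hnx2, smul_eq_mul, Finset.mul_sum, sq]
      rw [hform]
      nlinarith [hlow, hlam', hnx2pos]
  refine ⟨hpos, ?_⟩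
  intro r hr
  letI : NormedRing (Matrix (Fin n) (Fin n) ℝ) := Matrix.linftyOpNormedRing
  letI : NormedAlgebra ℝ (Matrix (Fin n) (Fin n) ℝ) := Matrix.linftyOpNormedAlgebra
  haveI : CompleteSpace (Matrix (Fin n) (Fin n) ℝ) := FiniteDimensional.complete ℝ _
  set gv : Fin n → ℝ := fun j => g j with hgv
  set A : ℝ → Matrix (Fin n) (Fin n) ℝ := fun s => H + (M * s / 2) • 1 with hA
  have hAderiv : HasDerivAt A ((M / 2) • (1 : Matrix (Fin n) (Fin n) ℝ)) r := by
    have h1 : HasDerivAt (fun s : ℝ => M * s / 2) (M / 2) r := by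
      simpa using ((hasDerivAt_id r).const_mul M).div_const 2
    exact (h1.smul_const (1 : Matrix (Fin n) (Fin n) ℝ)).const_add H
  have hu : IsUnit (A r) := (hpos r hr).isUnit
  set B := (A r)⁻¹ with hB
  have hinvB : B = ↑hu.unit⁻¹ := by
    have h := Ring.inverse_unit hu.unit
    rw [hu.unit_spec] at h
    rw [hB, Matrix.nonsing_inv_eq_ringInverse, h]
  have hF : HasFDerivAt Ring.inverse
      (-(ContinuousLinearMap.mulLeftRight ℝ (Matrix (Fin n) (Fin n) ℝ) B B)) (A r) := by
    have h := hasFDerivAt_ringInverse (𝕜 := ℝ) hu.unit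
    rwa [hu.unit_spec, ← hinvB] at h
  have hinvDeriv : HasDerivAt (fun s => (A s)⁻¹) ((-(M/2)) • (B * B)) r := by
    have h := hF.comp_hasDerivAt r hAderiv
    simp only [Function.comp_def, ← Matrix.nonsing_inv_eq_ringInverse] at h
    refine h.congr_deriv ?_
    simp only [ContinuousLinearMap.neg_apply, ContinuousLinearMap.mulLeftRight_apply,
      mul_smul_comm, smul_mul_assoc, mul_one, neg_smul]
  let L : Matrix (Fin n) (Fin n) ℝ →ₗ[ℝ] ℝ :=
    { toFun := fun C => ∑ i, (C.mulVec gv) i * gv i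
      map_add' := by
        intro C D
        simp [Matrix.add_mulVec, add_mul, Finset.sum_add_distrib]
      map_smul' := by
        intro c C
        simp [Matrix.smul_mulVec, Finset.mul_sum, mul_assoc] }
  let Lc : Matrix (Fin n) (Fin n) ℝ →L[ℝ] ℝ := L.toContinuousLinearMap
  have h2 : HasDerivAt (fun s => Lc ((A s)⁻¹)) (Lc ((-(M/2)) • (B * B))) r :=
    Lc.hasFDerivAt.comp_hasDerivAt r hinvDeriv
  have h3 : HasDerivAt (fun s : ℝ => -(1/2 : ℝ) * (Lc ((A s)⁻¹)) - (M/12)*s^3)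
      (-(1/2 : ℝ) * (Lc ((-(M/2)) • (B * B))) - (M/12)*(3*r^2)) r := by
    have := (h2.const_mul (-(1/2 : ℝ))).sub ((hasDerivAt_pow 3 r).const_mul (M/12))
    simpa [Pi.sub_def] using this
  -- identify with the goal
  have hBsymm : B.transpose = B := by
    rw [hB, Matrix.transpose_nonsing_inv, hsymm r]
  have hzz : Lc (B * B) = ∑ i, ((B.mulVec gv) i) ^ 2 := by
    show ∑ i, ((B * B).mulVec gv) i * gv i = _
    have e1 : (B * B).mulVec gv = B.mulVec (B.mulVec gv) := (Matrix.mulVec_mulVec _ _ _).symm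
    rw [e1]
    set z := B.mulVec gv with hz
    have : ∑ i, (B.mulVec z) i * gv i = dotProduct (B.mulVec z) gv := rfl
    rw [this, dotProduct_comm, Matrix.dotProduct_mulVec, ← Matrix.mulVec_transpose,
      hBsymm, ← hz]
    simp [dotProduct, sq]
  have hsmul : Lc ((-(M/2)) • (B * B)) = (-(M/2)) * Lc (B * B) := by
    rw [map_smul]; simp
  have hval : -(1/2 : ℝ) * (Lc ((-(M/2)) • (B * B))) - (M/12)*(3*r^2)
      = (M / 4) * ((∑ i, ((B.mulVec gv) i) ^ 2) - r ^ 2) := by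
    rw [hsmul, hzz]; ring
  rw [← hval]
  exact h3
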